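/- arXiv:1409.2772 — 12 statements merged into one kernel-verified Lean document; each statement's English description precedes it below -/
import Mathlib

section
/- For the function g(x) = |x² − 1| on ℝ, every point a with |a| ≥ 1 is a point of convexity of g relative to the entire real line: for all x₁,...,xₙ ∈ ℝ and positive weights λ₁,...,λₙ with Σλₖ = 1 and Σλₖxₖ = a, we have |a² − 1| ≤ Σλₖ|xₖ² − 1|. -/
theorem abs_sq_sub_one_point_of_convexity
    (a : ℝ) (ha : 1 ≤ |a|)
    (n : ℕ) (x : Fin n → ℝ) (lam : Fin n → ℝ)
    (hpos : ∀ k, 0 < lam k) (hsum : ∑ k, lam k = 1)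
    (hbar : ∑ k, lam k * x k = a) :
    |a ^ 2 - 1| ≤ ∑ k, lam k * |x k ^ 2 - 1| := by
  have ha2 : 0 ≤ a ^ 2 - 1 := by nlinarith [sq_abs a]
  rw [abs_of_nonneg ha2]
  have key : ∀ k ∈ Finset.univ, lam k * (2*a*x k - a^2 - 1) ≤ lam k * |x k ^ 2 - 1| := by
    intro k _
    apply mul_le_mul_of_nonneg_left _ (hpos k).le
    nlinarith [le_abs_self (x k ^ 2 - 1), sq_nonneg (x k - a)]
  have hs := Finset.sum_le_sum key
  have heq : ∑ k, lam k * (2*a*x k - a^2 - 1) = a ^ 2 - 1 := by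
    have : ∑ k, lam k * (2*a*x k - a^2 - 1)
        = 2*a*(∑ k, lam k * x k) - (a^2+1)*(∑ k, lam k) := by
      rw [Finset.mul_sum, Finset.mul_sum, ← Finset.sum_sub_distrib]
      exact Finset.sum_congr rfl fun k _ => by ring
    rw [this, hbar, hsum]; ring
  linarith
end

section
/- For every family of real numbers x₁, ..., xₙ and positive weights λ₁, ..., λₙ with Σₖ λₖ = 1 and Σₖ λₖ xₖ ≥ −1, the inequality Σₖ λₖ xₖ e^{xₖ} ≥ (Σₖ λₖ xₖ) · e^{Σₖ λₖ xₖ} holds. -/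
lemma tangent_xexp (s t : ℝ) (hs : -1 ≤ s) :
    s * Real.exp s + (1 + s) * Real.exp s * t ≤ (s + t) * Real.exp (s + t) := by
  rw [Real.exp_add]
  have hes : 0 < Real.exp s := Real.exp_pos s
  have het : 0 < Real.exp t := Real.exp_pos t
  -- reduce to (s+t) * exp t ≥ s + (1+s) t
  have key : s + (1 + s) * t ≤ (s + t) * Real.exp t := by
    rcases le_or_gt 0 (s + t) with h | h
    · have h1 : 1 + t ≤ Real.exp t := by linarith [Real.add_one_le_exp t]
      nlinarith [sq_nonneg t]
    · have h1 : 1 - t ≤ Real.exp (-t) := by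
        have := Real.add_one_le_exp (-t); linarith
      have h2 : Real.exp t * (1 - t) ≤ 1 := by
        have := mul_le_mul_of_nonneg_left h1 het.le
        rw [← Real.exp_add] at this
        simpa using this
      have ht1 : t < 1 := by nlinarith
      nlinarith [mul_nonneg (mul_nonneg (by linarith : (0:ℝ) ≤ 1 + s) (sq_nonneg t)) het.le,
        mul_le_mul_of_nonneg_left h2 (by linarith : (0:ℝ) ≤ -(s+t)),
        mul_pos het (by linarith : (0:ℝ) < 1 - t), sq_nonneg t,
        mul_nonneg (by linarith : (0:ℝ) ≤ 1 + s) (sq_nonneg t)]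
  nlinarith [mul_le_mul_of_nonneg_right key hes.le]

theorem weighted_xexp_jensen
    (n : ℕ) (x : Fin n → ℝ) (lam : Fin n → ℝ)
    (hpos : ∀ k, 0 < lam k) (hsum : ∑ k, lam k = 1)
    (hbar : -1 ≤ ∑ k, lam k * x k) :
    (∑ k, lam k * x k) * Real.exp (∑ k, lam k * x k) ≤
      ∑ k, lam k * (x k * Real.exp (x k)) := by
  set S : ℝ := ∑ k, lam k * x k with hS
  have key : ∑ k, lam k * (S * Real.exp S + (1 + S) * Real.exp S * (x k - S))
      = S * Real.exp S := by
    have h1 : ∀ k : Fin n, lam k * (S * Real.exp S + (1 + S) * Real.exp S * (x k - S))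
        = (S * Real.exp S - (1 + S) * Real.exp S * S) * lam k
          + (1 + S) * Real.exp S * (lam k * x k) := fun k => by ring
    simp_rw [h1, Finset.sum_add_distrib, ← Finset.mul_sum, hsum]
    ring
  calc S * Real.exp S
      = ∑ k, lam k * (S * Real.exp S + (1 + S) * Real.exp S * (x k - S)) := key.symm
    _ ≤ ∑ k, lam k * (x k * Real.exp (x k)) := by
        refine Finset.sum_le_sum fun k _ => mul_le_mul_of_nonneg_left ?_ (hpos k).le
        have := tangent_xexp S (x k - S) hbar
        simpa using this
end

section
/- Every point a ≥ −1 is a point of convexity of the function f(x) = x·eˣ relative to the whole real line, i.e., the tangent line to the graph of f at any a ≥ −1 lies below the graph: for all a ≥ −1 and all x ∈ ℝ, x·eˣ ≥ a·eᵃ + (a+1)eᵃ·(x − a). -/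
theorem xexp_tangent_below (a : ℝ) (ha : -1 ≤ a) (x : ℝ) :
    a * Real.exp a + (a + 1) * Real.exp a * (x - a) ≤ x * Real.exp x := by
  have hA : 0 < Real.exp a := Real.exp_pos a
  have hE : 0 < Real.exp (x - a) := Real.exp_pos _
  have hx : Real.exp x = Real.exp a * Real.exp (x - a) := by
    rw [← Real.exp_add]; ring_nf
  have h1 : (x - a) + 1 ≤ Real.exp (x - a) := Real.add_one_le_exp _
  have h2 : (1 - (x - a)) * Real.exp (x - a) ≤ 1 := by
    calc (1 - (x - a)) * Real.exp (x - a)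
        ≤ Real.exp (-(x - a)) * Real.exp (x - a) := by
          apply mul_le_mul_of_nonneg_right _ hE.le
          linarith [Real.add_one_le_exp (-(x - a))]
      _ = 1 := by rw [← Real.exp_add]; simp
  have key1 : 0 ≤ (1 + a) * (Real.exp (x - a) - 1 - (x - a)) := by nlinarith
  have key2 : 0 ≤ 1 - (1 - (x - a)) * Real.exp (x - a) := by linarith
  rw [hx]
  nlinarith [mul_nonneg key1 hA.le, mul_nonneg key2 hA.le]
end

section
/- Suppose f : K → ℝ is defined on a compact convex set K ⊆ ℝ^N, and Σᵢ λᵢ δ_{xᵢ} ≺ Σⱼ μⱼ δ_{yⱼ} are two positive discrete measures concentrated at points of K, meaning there exists an m×n matrix A = (a_{ij}) with a_{ij} ≥ 0, Σⱼ a_{ij} = 1 for each i, μⱼ = Σᵢ a_{ij} λᵢ for each j, and xᵢ = Σⱼ a_{ij} yⱼ for each i. If each xᵢ is a point of convexity of f relative to K, then Σᵢ λᵢ f(xᵢ) ≤ Σⱼ μⱼ f(yⱼ). -/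
lemma convexity_point_step {N n : ℕ} {K : Set (EuclideanSpace ℝ (Fin N))}
    {f : EuclideanSpace ℝ (Fin N) → ℝ}
    (y : Fin n → EuclideanSpace ℝ (Fin N)) (w : Fin n → ℝ)
    (x : EuclideanSpace ℝ (Fin N))
    (hy : ∀ j, y j ∈ K) (hw : ∀ j, 0 ≤ w j) (hw1 : ∑ j, w j = 1)
    (hxw : x = ∑ j, w j • y j)
    (hc : ∀ (p : ℕ) (z : Fin p → EuclideanSpace ℝ (Fin N)) (nu : Fin p → ℝ),
      (∀ k, z k ∈ K) → (∀ k, 0 < nu k) → (∑ k, nu k = 1) →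
      (∑ k, nu k • z k = x) → f x ≤ ∑ k, nu k * f (z k)) :
    f x ≤ ∑ j, w j * f (y j) := by
  classical
  set s : Finset (Fin n) := Finset.univ.filter (fun j => w j ≠ 0) with hs
  have hmem : ∀ j ∈ s, w j ≠ 0 := fun j hj => (Finset.mem_filter.mp hj).2
  let e : {j // j ∈ s} ≃ Fin s.card := s.equivFin
  have key : ∀ (g : Fin n → ℝ),
      (∀ j, w j = 0 → g j = 0) → ∑ k : Fin s.card, g (e.symm k) = ∑ j, g j := by
    intro g hg
    rw [Equiv.sum_comp e.symm (fun a => g a), Finset.sum_coe_sort s g]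
    rw [Finset.sum_filter_of_ne]
    intro j _ hgj
    by_contra h
    exact hgj (hg j h)
  have keyv : ∀ (g : Fin n → EuclideanSpace ℝ (Fin N)),
      (∀ j, w j = 0 → g j = 0) → ∑ k : Fin s.card, g (e.symm k) = ∑ j, g j := by
    intro g hg
    rw [Equiv.sum_comp e.symm (fun a => g a), Finset.sum_coe_sort s g]
    rw [Finset.sum_filter_of_ne]
    intro j _ hgj
    by_contra h
    exact hgj (hg j h)
  have h1 : ∑ k : Fin s.card, w (e.symm k) = 1 := by
    rw [key (fun j => w j) (fun j h => h)]; exact hw1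
  have h2 : ∑ k : Fin s.card, w (e.symm k) • y (e.symm k) = x := by
    rw [keyv (fun j => w j • y j) (fun j h => by simp [h])]; exact hxw.symm
  have h3 : f x ≤ ∑ k : Fin s.card, w (e.symm k) * f (y (e.symm k)) := by
    refine hc s.card (fun k => y (e.symm k)) (fun k => w (e.symm k))
      (fun k => hy _) (fun k => ?_) h1 h2
    exact lt_of_le_of_ne (hw _) (Ne.symm (hmem _ (e.symm k).2))
  calc f x ≤ ∑ k : Fin s.card, w (e.symm k) * f (y (e.symm k)) := h3
    _ = ∑ j, w j * f (y j) := key (fun j => w j * f (y j)) (fun j h => by simp [h])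

theorem generalized_HLP_majorization
    {N : ℕ} (K : Set (EuclideanSpace ℝ (Fin N)))
    (hK : IsCompact K) (hKc : Convex ℝ K)
    (f : EuclideanSpace ℝ (Fin N) → ℝ)
    (m n : ℕ)
    (x : Fin m → EuclideanSpace ℝ (Fin N)) (y : Fin n → EuclideanSpace ℝ (Fin N))
    (lam : Fin m → ℝ) (mu : Fin n → ℝ)
    (hx : ∀ i, x i ∈ K) (hy : ∀ j, y j ∈ K)
    (hlam : ∀ i, 0 < lam i) (hmu : ∀ j, 0 < mu j)
    (A : Fin m → Fin n → ℝ)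
    (hA0 : ∀ i j, 0 ≤ A i j)
    (hArow : ∀ i, ∑ j, A i j = 1)
    (hAmu : ∀ j, mu j = ∑ i, A i j * lam i)
    (hAx : ∀ i, x i = ∑ j, A i j • y j)
    (hconv : ∀ i, ∀ (p : ℕ) (z : Fin p → EuclideanSpace ℝ (Fin N)) (nu : Fin p → ℝ),
      (∀ k, z k ∈ K) → (∀ k, 0 < nu k) → (∑ k, nu k = 1) →
      (∑ k, nu k • z k = x i) → f (x i) ≤ ∑ k, nu k * f (z k)) :
    ∑ i, lam i * f (x i) ≤ ∑ j, mu j * f (y j) := by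
  have step : ∀ i, f (x i) ≤ ∑ j, A i j * f (y j) := fun i =>
    convexity_point_step y (A i) (x i) hy (hA0 i) (hArow i) (hAx i) (hconv i)
  calc ∑ i, lam i * f (x i) ≤ ∑ i, lam i * ∑ j, A i j * f (y j) := by
        apply Finset.sum_le_sum
        intro i _
        exact mul_le_mul_of_nonneg_left (step i) (hlam i).le
    _ = ∑ j, mu j * f (y j) := by
        simp_rw [Finset.mul_sum, hAmu, Finset.sum_mul]
        rw [Finset.sum_comm]
        congr 1; ext i; congr 1; ext j; ring
end

section
/- Let x and y be vectors in ℝ^N with entries in an interval I. If there exists a doubly stochastic N×N matrix A with x = Ay, then Σᵢ f(xᵢ) ≤ Σᵢ f(yᵢ) for every continuous convex function f : I → ℝ. -/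
theorem hlp_doublyStochastic_implies_convex_ineq
    {N : ℕ} (I : Set ℝ) (hI : Convex ℝ I)
    (x y : Fin N → ℝ)
    (hx : ∀ i, x i ∈ I) (hy : ∀ i, y i ∈ I)
    (A : Matrix (Fin N) (Fin N) ℝ)
    (hA0 : ∀ i j, 0 ≤ A i j)
    (hArow : ∀ i, ∑ j, A i j = 1)
    (hAcol : ∀ j, ∑ i, A i j = 1)
    (hxy : x = A.mulVec y)
    (f : ℝ → ℝ) (hf : ConvexOn ℝ I f) (hfc : ContinuousOn f I) :
    ∑ i, f (x i) ≤ ∑ i, f (y i) := by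
  have h1 : ∀ i, f (x i) ≤ ∑ j, A i j * f (y j) := by
    intro i
    have := hf.map_sum_le (t := Finset.univ) (w := fun j => A i j) (p := y)
      (fun j _ => hA0 i j) (hArow i) (fun j _ => hy j)
    simpa [hxy, Matrix.mulVec, dotProduct, smul_eq_mul] using this
  calc ∑ i, f (x i) ≤ ∑ i, ∑ j, A i j * f (y j) :=
        Finset.sum_le_sum fun i _ => h1 i
    _ = ∑ j, (∑ i, A i j) * f (y j) := by
        rw [Finset.sum_comm]; simp [Finset.sum_mul]
    _ = ∑ j, f (y j) := by simp [hAcol]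
end

section
/- Let x, y ∈ ℝ^N with entries in an interval I. If Σᵢ f(xᵢ) ≤ Σᵢ f(yᵢ) for every continuous convex function f : I → ℝ, then x is majorized by y, i.e., for each k = 1,...,N−1 the sum of the k largest entries of x is at most the sum of the k largest entries of y, and the total sums are equal. -/
/-- The decreasing rearrangement of a finite tuple of reals. -/
noncomputable def decRearr {N : ℕ} (x : Fin N → ℝ) : Fin N → ℝ :=
  fun i => x (Tuple.sort x i.rev)

lemma decRearr_antitone {N : ℕ} (x : Fin N → ℝ) : Antitone (decRearr x) := by
  intro i j hij
  exact Tuple.monotone_sort x (Fin.rev_le_rev.mpr hij)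

lemma sum_comp_decRearr {N : ℕ} (x : Fin N → ℝ) (g : ℝ → ℝ) :
    ∑ i, g (decRearr x i) = ∑ i, g (x i) := by
  have e : Equiv.Perm (Fin N) := (Fin.revPerm.trans (Tuple.sort x))
  exact Equiv.sum_comp (Fin.revPerm.trans (Tuple.sort x)) (fun i => g (x i))

theorem hlp_convex_ineq_implies_majorization
    {N : ℕ} (I : Set ℝ) (hI : Convex ℝ I)
    (x y : Fin N → ℝ)
    (hx : ∀ i, x i ∈ I) (hy : ∀ i, y i ∈ I)
    (h : ∀ f : ℝ → ℝ, ConvexOn ℝ I f → ContinuousOn f I →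
      ∑ i, f (x i) ≤ ∑ i, f (y i)) :
    (∀ k < N,
      ∑ i ∈ Finset.univ.filter (fun i : Fin N => (i : ℕ) < k), decRearr x i ≤
      ∑ i ∈ Finset.univ.filter (fun i : Fin N => (i : ℕ) < k), decRearr y i) ∧
    ∑ i, x i = ∑ i, y i := by
  constructor
  · intro k hk
    set c : ℝ := decRearr y ⟨k, hk⟩ with hc
    set f : ℝ → ℝ := fun t => max (t - c) 0 with hf
    have hconv : ConvexOn ℝ I f := by
      apply ConvexOn.sup _ (convexOn_const 0 hI)
      exact (convexOn_id hI).sub (concaveOn_const c hI)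
    have hcont : ContinuousOn f I :=
      (Continuous.max (by continuity) continuous_const).continuousOn
    have hfy : ∑ i, f (y i) = ∑ i ∈ Finset.univ.filter (fun i : Fin N => (i : ℕ) < k),
        (decRearr y i - c) := by
      rw [← sum_comp_decRearr y f]
      rw [← Finset.sum_filter_add_sum_filter_not Finset.univ (fun i : Fin N => (i : ℕ) < k)]
      have h1 : ∀ i ∈ Finset.univ.filter (fun i : Fin N => (i : ℕ) < k),
          f (decRearr y i) = decRearr y i - c := by
        intro i hi
        simp only [Finset.mem_filter] at hi
        have : c ≤ decRearr y i := by
          apply decRearr_antitone y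
          exact Fin.le_def.mpr (le_of_lt hi.2)
        simp [hf, sub_nonneg.mpr this, max_eq_left]
      have h2 : ∀ i ∈ Finset.univ.filter (fun i : Fin N => ¬ (i : ℕ) < k),
          f (decRearr y i) = 0 := by
        intro i hi
        simp only [Finset.mem_filter, not_lt] at hi
        have : decRearr y i ≤ c := by
          apply decRearr_antitone y
          exact Fin.le_def.mpr hi.2
        simp [hf, max_eq_right, sub_nonpos.mpr this]
      rw [Finset.sum_congr rfl h1, Finset.sum_congr rfl h2]
      simp
    have hfx : ∑ i ∈ Finset.univ.filter (fun i : Fin N => (i : ℕ) < k),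
        (decRearr x i - c) ≤ ∑ i, f (x i) := by
      rw [← sum_comp_decRearr x f]
      calc ∑ i ∈ Finset.univ.filter (fun i : Fin N => (i : ℕ) < k), (decRearr x i - c)
          ≤ ∑ i ∈ Finset.univ.filter (fun i : Fin N => (i : ℕ) < k), f (decRearr x i) :=
            Finset.sum_le_sum (fun i _ => le_max_left _ _)
        _ ≤ ∑ i, f (decRearr x i) := by
            apply Finset.sum_le_sum_of_subset_of_nonneg (Finset.filter_subset _ _)
            intro i _ _; exact le_max_right _ _
    have key := h f hconv hcont
    have := hfx.trans (key.trans hfy.le)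
    have := sub_le_sub_right this (0 : ℝ)
    simp only [Finset.sum_sub_distrib] at this
    linarith [this]
  · have h1 := h id (convexOn_id hI) continuousOn_id
    have h2 := h (fun t => -t) ((concaveOn_id hI).neg) continuous_neg.continuousOn
    simp only [id_eq] at h1
    simp only [Finset.sum_neg_distrib, neg_le_neg_iff] at h2
    exact le_antisymm h1 h2
end

section
/- Let f be a real-valued function on an interval I and let a, b, c ∈ I. If the three midpoints (a+b)/2, (a+c)/2, (b+c)/2 are points of convexity of f relative to I, then (f(a) + f(b) + f(c))/3 + f((a+b+c)/3) ≥ (2/3)[f((a+b)/2) + f((a+c)/2) + f((b+c)/2)]. -/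
def PCpt (I : Set ℝ) (f : ℝ → ℝ) (p : ℝ) : Prop :=
  ∀ (n : ℕ) (x : Fin n → ℝ) (lam : Fin n → ℝ),
    (∀ k, x k ∈ I) → (∀ k, 0 < lam k) → (∑ k, lam k = 1) →
    (∑ k, lam k * x k = p) → f p ≤ ∑ k, lam k * f (x k)

lemma pc_one_pt {I : Set ℝ} {f : ℝ → ℝ} {p : ℝ} (hp : PCpt I f p)
    (v : ℝ) (hv : v ∈ I) (hpv : v = p) : f p ≤ f v := by
  have := hp 1 ![v] ![1] (by intro k; fin_cases k <;> simpa)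
    (by intro k; fin_cases k <;> norm_num)
    (by simp) (by simpa)
  simpa using this

lemma pc_two_pt {I : Set ℝ} {f : ℝ → ℝ} {p : ℝ} (hp : PCpt I f p)
    (u v μ : ℝ) (hu : u ∈ I) (hv : v ∈ I) (h0 : 0 ≤ μ) (h1 : μ ≤ 1)
    (hcomb : μ * u + (1 - μ) * v = p) :
    f p ≤ μ * f u + (1 - μ) * f v := by
  rcases eq_or_lt_of_le h0 with h | h
  · have hpv : v = p := by rw [← hcomb, ← h]; ring
    have := pc_one_pt hp v hv hpv
    rw [← h]; linarith
  · rcases eq_or_lt_of_le h1 with h' | h'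
    · have hpu : u = p := by rw [← hcomb, h']; ring
      have := pc_one_pt hp u hu hpu
      rw [h']; linarith
    · have := hp 2 ![u, v] ![μ, 1 - μ]
        (by intro k; fin_cases k <;> simpa)
        (by intro k; fin_cases k <;> simp <;> linarith)
        (by simp only [Fin.sum_univ_two, Matrix.cons_val_zero, Matrix.cons_val_one,
          Matrix.head_cons]; ring)
        (by simp only [Fin.sum_univ_two, Matrix.cons_val_zero, Matrix.cons_val_one,
          Matrix.head_cons]; linarith)
      simpa [Fin.sum_univ_two] using this

lemma popoviciu_aux
    (I : Set ℝ) (hI : Convex ℝ I)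
    (f : ℝ → ℝ) (x y z : ℝ)
    (hx : x ∈ I) (hy : y ∈ I) (hz : z ∈ I)
    (hxy : x ≤ y) (hyz : y ≤ z)
    (h1 : PCpt I f ((x + y) / 2)) (h2 : PCpt I f ((x + z) / 2))
    (h3 : PCpt I f ((y + z) / 2)) :
    (2 / 3) * (f ((x + y) / 2) + f ((x + z) / 2) + f ((y + z) / 2)) ≤
      (f x + f y + f z) / 3 + f ((x + y + z) / 3) := by
  set g := (x + y + z) / 3 with hg
  have hgI : g ∈ I := by
    have hm : (1/2 : ℝ) • x + (1/2 : ℝ) • y ∈ I :=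
      hI hx hy (by norm_num) (by norm_num) (by norm_num)
    have hgm : (2/3 : ℝ) • ((1/2 : ℝ) • x + (1/2 : ℝ) • y) + (1/3 : ℝ) • z ∈ I :=
      hI hm hz (by norm_num) (by norm_num) (by norm_num)
    have hrepr : g = (2/3 : ℝ) • ((1/2 : ℝ) • x + (1/2 : ℝ) • y) + (1/3 : ℝ) • z := by
      simp only [smul_eq_mul, hg]; ring
    rw [hrepr]; exact hgm
  rcases eq_or_lt_of_le (le_trans hxy hyz) with hxz | hxz
  · -- x = z, hence x = y = z
    have hxy' : x = y := le_antisymm hxy (by linarith)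
    subst hxy'; rw [← hxz]
    have e1 : (x + x) / 2 = x := by ring
    have e2 : g = x := by rw [hg, ← hxz]; ring
    rw [e1, e2]
    linarith
  · rcases le_total y g with hcase | hcase
    · -- y ≤ g : midpoint xy via x,y ; midpoints xz, yz via g,z
      have hD : 0 < 2 * z - x - y := by linarith
      set s := 3 * (z - x) / (2 * (2 * z - x - y)) with hs
      set t := 3 * (z - y) / (2 * (2 * z - x - y)) with ht
      have hs0 : 0 ≤ s := by
        apply div_nonneg <;> nlinarith
      have hs1 : s ≤ 1 := by
        rw [hs, div_le_one (by linarith)]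
        have : 2 * y ≤ x + z := by
          have : 3 * y ≤ x + y + z := by
            have := hcase; rw [hg] at this; linarith
          linarith
        linarith
      have ht0 : 0 ≤ t := by apply div_nonneg <;> nlinarith
      have ht1 : t ≤ 1 := by
        rw [ht, div_le_one (by linarith)]; linarith
      have hst : s + t = 3 / 2 := by
        rw [hs, ht]; field_simp [(show (0:ℝ) < z * 2 - x - y by linarith).ne']; ring
      have k1 : f ((x + y) / 2) ≤ (1/2) * f x + (1 - (1/2)) * f y :=
        pc_two_pt h1 x y (1/2) hx hy (by norm_num) (by norm_num) (by ring)
      have k2 : f ((x + z) / 2) ≤ s * f g + (1 - s) * f z := by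
        apply pc_two_pt h2 g z s hgI hz hs0 hs1
        rw [hs, hg]; field_simp [(show (0:ℝ) < z * 2 - x - y by linarith).ne']; ring
      have k3 : f ((y + z) / 2) ≤ t * f g + (1 - t) * f z := by
        apply pc_two_pt h3 g z t hgI hz ht0 ht1
        rw [ht, hg]; field_simp [(show (0:ℝ) < z * 2 - x - y by linarith).ne']; ring
      have hsum : s * f g + t * f g = (3/2) * f g := by
        have : s * f g + t * f g = (s + t) * f g := by ring
        rw [this, hst]
      have hsum2 : (1 - s) * f z + (1 - t) * f z = (1/2) * f z := by
        have : (1 - s) * f z + (1 - t) * f z = (2 - (s + t)) * f z := by ring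
        rw [this, hst]; ring
      linarith
    · -- g ≤ y : midpoint yz via y,z ; midpoints xy, xz via x,g
      have hD : 0 < y + z - 2 * x := by linarith
      set s := (2 * z - x - y) / (2 * (y + z - 2 * x)) with hs
      set t := (2 * y - x - z) / (2 * (y + z - 2 * x)) with ht
      have hs0 : 0 ≤ s := by apply div_nonneg <;> linarith
      have hs1 : s ≤ 1 := by
        rw [hs, div_le_one (by linarith)]; linarith
      have ht0 : 0 ≤ t := by
        apply div_nonneg
        · have : x + z ≤ 2 * y := by
            have := hcase; rw [hg] at this; linarith
          linarith
        · linarith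
      have ht1 : t ≤ 1 := by
        rw [ht, div_le_one (by linarith)]; linarith
      have hst : s + t = 1 / 2 := by
        rw [hs, ht]; field_simp; ring
      have k3 : f ((y + z) / 2) ≤ (1/2) * f y + (1 - (1/2)) * f z :=
        pc_two_pt h3 y z (1/2) hy hz (by norm_num) (by norm_num) (by ring)
      have k1 : f ((x + y) / 2) ≤ s * f x + (1 - s) * f g := by
        apply pc_two_pt h1 x g s hx hgI hs0 hs1
        rw [hs, hg]; field_simp; ring
      have k2 : f ((x + z) / 2) ≤ t * f x + (1 - t) * f g := by
        apply pc_two_pt h2 x g t hx hgI ht0 ht1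
        rw [ht, hg]; field_simp; ring
      have hsum : s * f x + t * f x = (1/2) * f x := by
        have : s * f x + t * f x = (s + t) * f x := by ring
        rw [this, hst]
      have hsum2 : (1 - s) * f g + (1 - t) * f g = (3/2) * f g := by
        have : (1 - s) * f g + (1 - t) * f g = (2 - (s + t)) * f g := by ring
        rw [this, hst]; ring
      linarith

theorem popoviciu_points_of_convexity
    (I : Set ℝ) (hI : Convex ℝ I)
    (f : ℝ → ℝ) (a b c : ℝ)
    (ha : a ∈ I) (hb : b ∈ I) (hc : c ∈ I)
    (hconv : ∀ p ∈ ({(a + b) / 2, (a + c) / 2, (b + c) / 2} : Set ℝ),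
      ∀ (n : ℕ) (x : Fin n → ℝ) (lam : Fin n → ℝ),
        (∀ k, x k ∈ I) → (∀ k, 0 < lam k) → (∑ k, lam k = 1) →
        (∑ k, lam k * x k = p) → f p ≤ ∑ k, lam k * f (x k)) :
    (2 / 3) * (f ((a + b) / 2) + f ((a + c) / 2) + f ((b + c) / 2)) ≤
      (f a + f b + f c) / 3 + f ((a + b + c) / 3) := by
  have hab : PCpt I f ((a + b) / 2) := hconv _ (by left; rfl)
  have hac : PCpt I f ((a + c) / 2) := hconv _ (by right; left; rfl)
  have hbc : PCpt I f ((b + c) / 2) := hconv _ (by right; right; rfl)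
  rcases le_total a b with h1 | h1 <;> rcases le_total b c with h2 | h2 <;>
    rcases le_total a c with h3 | h3
  · have key := popoviciu_aux I hI f a b c ha hb hc h1 h2 hab hac hbc
    linarith
  · have key := popoviciu_aux I hI f a b c ha hb hc h1 h2 hab hac hbc
    linarith
  · -- a ≤ b, c ≤ b, a ≤ c : order a c b
    have key := popoviciu_aux I hI f a c b ha hc hb h3 h2
      (by rwa [show (a + c) / 2 = (a + c) / 2 from rfl])
      (by rwa [show (a + b) / 2 = (a + b) / 2 from rfl]) ?_
    · rw [show (c + b) / 2 = (b + c) / 2 by ring, show (a + c + b) / 3 = (a + b + c) / 3 by ring] at key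
      linarith
    · rwa [show (c + b) / 2 = (b + c) / 2 by ring]
  · -- a ≤ b, c ≤ b, c ≤ a : order c a b
    have key := popoviciu_aux I hI f c a b hc ha hb h3 h1
      (by rwa [show (c + a) / 2 = (a + c) / 2 by ring])
      (by rwa [show (c + b) / 2 = (b + c) / 2 by ring])
      (by rwa [show (a + b) / 2 = (a + b) / 2 from rfl])
    rw [show (c + a) / 2 = (a + c) / 2 by ring, show (c + b) / 2 = (b + c) / 2 by ring,
      show (c + a + b) / 3 = (a + b + c) / 3 by ring] at key
    linarith
  · -- b ≤ a, b ≤ c, a ≤ c : order b a c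
    have key := popoviciu_aux I hI f b a c hb ha hc h1 h3
      (by rwa [show (b + a) / 2 = (a + b) / 2 by ring])
      (by rwa [show (b + c) / 2 = (b + c) / 2 from rfl])
      (by rwa [show (a + c) / 2 = (a + c) / 2 from rfl])
    rw [show (b + a) / 2 = (a + b) / 2 by ring,
      show (b + a + c) / 3 = (a + b + c) / 3 by ring] at key
    linarith
  · -- b ≤ a, b ≤ c, c ≤ a : order b c a
    have key := popoviciu_aux I hI f b c a hb hc ha h2 h3
      (by rwa [show (b + c) / 2 = (b + c) / 2 from rfl])
      (by rwa [show (b + a) / 2 = (a + b) / 2 by ring])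
      (by rwa [show (c + a) / 2 = (a + c) / 2 by ring])
    rw [show (b + a) / 2 = (a + b) / 2 by ring, show (c + a) / 2 = (a + c) / 2 by ring,
      show (b + c + a) / 3 = (a + b + c) / 3 by ring] at key
    linarith
  · -- b ≤ a, c ≤ b : order c b a
    have key := popoviciu_aux I hI f c b a hc hb ha h2 h1
      (by rwa [show (c + b) / 2 = (b + c) / 2 by ring])
      (by rwa [show (c + a) / 2 = (a + c) / 2 by ring])
      (by rwa [show (b + a) / 2 = (a + b) / 2 by ring])
    rw [show (c + b) / 2 = (b + c) / 2 by ring, show (c + a) / 2 = (a + c) / 2 by ring,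
      show (b + a) / 2 = (a + b) / 2 by ring,
      show (c + b + a) / 3 = (a + b + c) / 3 by ring] at key
    linarith
  · -- impossible-ish: c ≤ b ≤ a and a ≤ c: all equal, order fine: use c b a
    have key := popoviciu_aux I hI f c b a hc hb ha h2 h1
      (by rwa [show (c + b) / 2 = (b + c) / 2 by ring])
      (by rwa [show (c + a) / 2 = (a + c) / 2 by ring])
      (by rwa [show (b + a) / 2 = (a + b) / 2 by ring])
    rw [show (c + b) / 2 = (b + c) / 2 by ring, show (c + a) / 2 = (a + c) / 2 by ring,
      show (b + a) / 2 = (a + b) / 2 by ring,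
      show (c + b + a) / 3 = (a + b + c) / 3 by ring] at key
    linarith
end

section
/- For every continuous convex function f : ℝ → ℝ and every triple a, b, c ∈ ℝ, the Popoviciu inequality holds: (f(a) + f(b) + f(c))/3 + f((a+b+c)/3) ≥ (2/3)[f((a+b)/2) + f((a+c)/2) + f((b+c)/2)]. -/
private lemma popoviciu_sorted
    (f : ℝ → ℝ) (hf : ConvexOn ℝ Set.univ f)
    {a b c : ℝ} (hab : a ≤ b) (hbc : b ≤ c) :
    (2 / 3) * (f ((a + b) / 2) + f ((a + c) / 2) + f ((b + c) / 2)) ≤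
      (f a + f b + f c) / 3 + f ((a + b + c) / 3) := by
  set m : ℝ := (a + b + c) / 3 with hm
  have hm3 : 3 * m = a + b + c := by rw [hm]; ring
  have h3 : f ((a + b) / 2) ≤ (f a + f b) / 2 := by
    have := hf.2 (Set.mem_univ a) (Set.mem_univ b)
      (by norm_num : (0:ℝ) ≤ 1/2) (by norm_num : (0:ℝ) ≤ 1/2)
      (by norm_num : (1/2 : ℝ) + 1/2 = 1)
    simp only [smul_eq_mul] at this
    have harg : (1/2 : ℝ) * a + (1/2 : ℝ) * b = (a + b) / 2 := by ring
    rw [harg] at this; linarith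
  have h3' : f ((b + c) / 2) ≤ (f b + f c) / 2 := by
    have := hf.2 (Set.mem_univ b) (Set.mem_univ c)
      (by norm_num : (0:ℝ) ≤ 1/2) (by norm_num : (0:ℝ) ≤ 1/2)
      (by norm_num : (1/2 : ℝ) + 1/2 = 1)
    simp only [smul_eq_mul] at this
    have harg : (1/2 : ℝ) * b + (1/2 : ℝ) * c = (b + c) / 2 := by ring
    rw [harg] at this; linarith
  rcases le_total b m with hbm | hmb
  · -- b ≤ m : use convexity on [m, c]
    rcases eq_or_lt_of_le (show m ≤ c by linarith) with hmc | hmc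
    · -- degenerate: a = b = c = m
      have hba : b = a := by linarith
      have hca : c = a := by linarith
      have hma : m = a := by linarith
      rw [hba, hca, hma,
        show (a + a) / 2 = a from by ring]
      linarith
    · have hcm : (0:ℝ) < c - m := by linarith
      have hne : c - m ≠ 0 := ne_of_gt hcm
      set s : ℝ := (c - a) / (2 * (c - m)) with hs
      set t : ℝ := (c - b) / (2 * (c - m)) with ht
      have hs0 : 0 ≤ s := div_nonneg (by linarith) (by linarith)
      have ht0 : 0 ≤ t := div_nonneg (by linarith) (by linarith)
      have hs1 : 0 ≤ 1 - s := by
        have : s ≤ 1 := by rw [hs, div_le_one (by linarith)]; linarith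
        linarith
      have ht1 : 0 ≤ 1 - t := by
        have : t ≤ 1 := by rw [ht, div_le_one (by linarith)]; linarith
        linarith
      have hst : s + t = 3 / 2 := by
        rw [hs, ht, ← add_div, div_eq_iff (by linarith : 2 * (c - m) ≠ 0)]
        linarith
      have h1 : f ((a + c) / 2) ≤ s * f m + (1 - s) * f c := by
        have := hf.2 (Set.mem_univ m) (Set.mem_univ c) hs0 hs1
          (by ring : s + (1 - s) = 1)
        simp only [smul_eq_mul] at this
        have harg : s * m + (1 - s) * c = (a + c) / 2 := by
          rw [hs]; field_simp; ring
        rwa [harg] at this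
      have h2 : f ((b + c) / 2) ≤ t * f m + (1 - t) * f c := by
        have := hf.2 (Set.mem_univ m) (Set.mem_univ c) ht0 ht1
          (by ring : t + (1 - t) = 1)
        simp only [smul_eq_mul] at this
        have harg : t * m + (1 - t) * c = (b + c) / 2 := by
          rw [ht]; field_simp; ring
        rwa [harg] at this
      have hsum : s * f m + (1 - s) * f c + (t * f m + (1 - t) * f c)
          = 3 / 2 * f m + 1 / 2 * f c := by
        linear_combination (f m - f c) * hst
      linarith
  · -- m ≤ b : use convexity on [a, m]
    rcases eq_or_lt_of_le (show a ≤ m by linarith) with ham | ham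
    · have hba : b = a := by linarith
      have hca : c = a := by linarith
      have hma : m = a := by linarith
      rw [hba, hca, hma,
        show (a + a) / 2 = a from by ring]
      linarith
    · have hma0 : (0:ℝ) < m - a := by linarith
      have hne : m - a ≠ 0 := ne_of_gt hma0
      set p : ℝ := (b - a) / (2 * (m - a)) with hp
      set q : ℝ := (c - a) / (2 * (m - a)) with hq
      have hp0 : 0 ≤ p := div_nonneg (by linarith) (by linarith)
      have hq0 : 0 ≤ q := div_nonneg (by linarith) (by linarith)
      have hp1 : 0 ≤ 1 - p := by
        have : p ≤ 1 := by rw [hp, div_le_one (by linarith)]; linarith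
        linarith
      have hq1 : 0 ≤ 1 - q := by
        have : q ≤ 1 := by rw [hq, div_le_one (by linarith)]; linarith
        linarith
      have hpq : p + q = 3 / 2 := by
        rw [hp, hq, ← add_div, div_eq_iff (by linarith : 2 * (m - a) ≠ 0)]
        linarith
      have h1 : f ((a + b) / 2) ≤ (1 - p) * f a + p * f m := by
        have := hf.2 (Set.mem_univ a) (Set.mem_univ m) hp1 hp0
          (by ring : (1 - p) + p = 1)
        simp only [smul_eq_mul] at this
        have harg : (1 - p) * a + p * m = (a + b) / 2 := by
          rw [hp]; field_simp; ring
        rwa [harg] at this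
      have h2 : f ((a + c) / 2) ≤ (1 - q) * f a + q * f m := by
        have := hf.2 (Set.mem_univ a) (Set.mem_univ m) hq1 hq0
          (by ring : (1 - q) + q = 1)
        simp only [smul_eq_mul] at this
        have harg : (1 - q) * a + q * m = (a + c) / 2 := by
          rw [hq]; field_simp; ring
        rwa [harg] at this
      have hsum : (1 - p) * f a + p * f m + ((1 - q) * f a + q * f m)
          = 1 / 2 * f a + 3 / 2 * f m := by
        linear_combination (f m - f a) * hpq
      linarith

theorem popoviciu_inequality
    (f : ℝ → ℝ) (hf : ConvexOn ℝ Set.univ f) (hfc : Continuous f)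
    (a b c : ℝ) :
    (2 / 3) * (f ((a + b) / 2) + f ((a + c) / 2) + f ((b + c) / 2)) ≤
      (f a + f b + f c) / 3 + f ((a + b + c) / 3) := by
  have sab : (b + a) / 2 = (a + b) / 2 := by ring
  have sac : (c + a) / 2 = (a + c) / 2 := by ring
  have sbc : (c + b) / 2 = (b + c) / 2 := by ring
  rcases le_total a b with h1 | h1
  · rcases le_total b c with h2 | h2
    · exact popoviciu_sorted f hf h1 h2
    · rcases le_total a c with h3 | h3
      · have h := popoviciu_sorted f hf h3 h2
        rw [sbc, show (a+c+b)/3 = (a+b+c)/3 from by ring] at h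
        linarith
      · have h := popoviciu_sorted f hf h3 h1
        rw [sac, sbc, show (c+a+b)/3 = (a+b+c)/3 from by ring] at h
        linarith
  · rcases le_total a c with h2 | h2
    · have h := popoviciu_sorted f hf h1 h2
      rw [sab, show (b+a+c)/3 = (a+b+c)/3 from by ring] at h
      linarith
    · rcases le_total b c with h3 | h3
      · have h := popoviciu_sorted f hf h3 h2
        rw [sab, sac, show (b+c+a)/3 = (a+b+c)/3 from by ring] at h
        linarith
      · have h := popoviciu_sorted f hf h3 h1
        rw [sab, sac, sbc, show (c+b+a)/3 = (a+b+c)/3 from by ring] at h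
        linarith
end

section
/- Assume WLOG a ≥ b ≥ c and a ≥ (a+b+c)/3 ≥ b. Then the 6-tuple x = ((a+b)/2, (a+b)/2, (a+c)/2, (a+c)/2, (b+c)/2, (b+c)/2) is majorized by the 6-tuple y = (a, (a+b+c)/3, (a+b+c)/3, (a+b+c)/3, b, c): the partial sums of the decreasing rearrangement of x are bounded by those of y, with equal total sums. -/
lemma decRearr_eq_self {N : ℕ} (x : Fin N → ℝ) (h : Monotone (x ∘ Fin.revPerm)) :
    decRearr x = x := by
  funext i
  have h2 : x ∘ (Fin.revPerm : Equiv.Perm (Fin N)) = x ∘ Tuple.sort x :=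
    Tuple.comp_sort_eq_comp_iff_monotone.mpr h
  have h3 := congrFun h2 i.rev
  simpa [decRearr, Function.comp] using h3.symm

theorem popoviciu_sextuple_majorization
    (a b c : ℝ) (hab : b ≤ a) (hbc : c ≤ b) (hm1 : (a + b + c) / 3 ≤ a)
    (hm2 : b ≤ (a + b + c) / 3) :
    let x : Fin 6 → ℝ :=
      ![(a + b) / 2, (a + b) / 2, (a + c) / 2, (a + c) / 2, (b + c) / 2, (b + c) / 2]
    let y : Fin 6 → ℝ :=
      ![a, (a + b + c) / 3, (a + b + c) / 3, (a + b + c) / 3, b, c]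
    (∀ k < 6,
      ∑ i ∈ Finset.univ.filter (fun i : Fin 6 => (i : ℕ) < k), decRearr x i ≤
      ∑ i ∈ Finset.univ.filter (fun i : Fin 6 => (i : ℕ) < k), decRearr y i) ∧
    ∑ i, x i = ∑ i, y i := by
  intro x y
  have h1 : (b + c) / 2 ≤ (a + c) / 2 := by linarith
  have h2 : (a + c) / 2 ≤ (a + b) / 2 := by linarith
  have h3 : (b + c) / 2 ≤ (a + b) / 2 := by linarith
  have h4 : c ≤ (a + b + c) / 3 := by linarith
  have h5 : (a + b + c) / 3 ≤ a := hm1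
  have h6 : c ≤ a := by linarith
  have hx : decRearr x = x := by
    apply decRearr_eq_self
    intro i j hij
    fin_cases i <;> fin_cases j <;>
      first
        | exact le_rfl | exact h1 | exact h2 | exact h3
        | exact absurd hij (by decide)
  have hy : decRearr y = y := by
    apply decRearr_eq_self
    intro i j hij
    fin_cases i <;> fin_cases j <;>
      first
        | exact le_rfl | exact hbc | exact h4 | exact hm2 | exact h5 | exact h6
        | exact hbc.trans hm2 | exact hm2.trans hm1 | exact hab
        | exact absurd hij (by decide)
  rw [hx, hy]
  refine ⟨?_, ?_⟩
  · intro k hk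
    have e0 : Finset.univ.filter (fun i : Fin 6 => (i : ℕ) < 0) = (∅ : Finset (Fin 6)) := by decide
    have e1 : Finset.univ.filter (fun i : Fin 6 => (i : ℕ) < 1) = {0} := by decide
    have e2 : Finset.univ.filter (fun i : Fin 6 => (i : ℕ) < 2) = {0, 1} := by decide
    have e3 : Finset.univ.filter (fun i : Fin 6 => (i : ℕ) < 3) = {0, 1, 2} := by decide
    have e4 : Finset.univ.filter (fun i : Fin 6 => (i : ℕ) < 4) = {0, 1, 2, 3} := by decide
    have e5 : Finset.univ.filter (fun i : Fin 6 => (i : ℕ) < 5) = {0, 1, 2, 3, 4} := by decide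
    have vx0 : x 0 = (a + b) / 2 := rfl
    have vx1 : x 1 = (a + b) / 2 := rfl
    have vx2 : x 2 = (a + c) / 2 := rfl
    have vx3 : x 3 = (a + c) / 2 := rfl
    have vx4 : x 4 = (b + c) / 2 := rfl
    have vy0 : y 0 = a := rfl
    have vy1 : y 1 = (a + b + c) / 3 := rfl
    have vy2 : y 2 = (a + b + c) / 3 := rfl
    have vy3 : y 3 = (a + b + c) / 3 := rfl
    have vy4 : y 4 = b := rfl
    interval_cases k
    · rw [e0]; simp
    · rw [e1]; simp [vx0, vy0]; linarith
    · rw [e2]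
      rw [Finset.sum_pair (by decide), Finset.sum_pair (by decide)]
      rw [vx0, vx1, vy0, vy1]; linarith
    · rw [e3]
      rw [show ({0,1,2} : Finset (Fin 6)).sum x = x 0 + x 1 + x 2 by
            rw [Finset.sum_insert (by decide), Finset.sum_insert (by decide),
              Finset.sum_singleton]; ring,
          show ({0,1,2} : Finset (Fin 6)).sum y = y 0 + y 1 + y 2 by
            rw [Finset.sum_insert (by decide), Finset.sum_insert (by decide),
              Finset.sum_singleton]; ring]
      rw [vx0, vx1, vx2, vy0, vy1, vy2]; linarith
    · rw [e4]
      rw [show ({0,1,2,3} : Finset (Fin 6)).sum x = x 0 + x 1 + x 2 + x 3 by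
            rw [Finset.sum_insert (by decide), Finset.sum_insert (by decide),
              Finset.sum_insert (by decide), Finset.sum_singleton]; ring,
          show ({0,1,2,3} : Finset (Fin 6)).sum y = y 0 + y 1 + y 2 + y 3 by
            rw [Finset.sum_insert (by decide), Finset.sum_insert (by decide),
              Finset.sum_insert (by decide), Finset.sum_singleton]; ring]
      rw [vx0, vx1, vx2, vx3, vy0, vy1, vy2, vy3]; linarith
    · rw [e5]
      rw [show ({0,1,2,3,4} : Finset (Fin 6)).sum x = x 0 + x 1 + x 2 + x 3 + x 4 by
            rw [Finset.sum_insert (by decide), Finset.sum_insert (by decide),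
              Finset.sum_insert (by decide), Finset.sum_insert (by decide),
              Finset.sum_singleton]; ring,
          show ({0,1,2,3,4} : Finset (Fin 6)).sum y = y 0 + y 1 + y 2 + y 3 + y 4 by
            rw [Finset.sum_insert (by decide), Finset.sum_insert (by decide),
              Finset.sum_insert (by decide), Finset.sum_insert (by decide),
              Finset.sum_singleton]; ring]
      rw [vx0, vx1, vx2, vx3, vx4, vy0, vy1, vy2, vy3, vy4]; linarith
  · show (∑ i, x i) = ∑ i, y i
    rw [Fin.sum_univ_six, Fin.sum_univ_six]
    show (a+b)/2 + (a+b)/2 + (a+c)/2 + (a+c)/2 + (b+c)/2 + (b+c)/2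
        = a + (a+b+c)/3 + (a+b+c)/3 + (a+b+c)/3 + b + c
    ring
end

section
/- Let x₁, x₂, x₃ and y₁, y₂, y₃ be positive real numbers satisfying x₁+x₂+x₃ ≤ y₁+y₂+y₃, x₁x₂+x₂x₃+x₃x₁ ≤ y₁y₂+y₂y₃+y₃y₁, and x₁x₂x₃ = y₁y₂y₃. Then log²x₁ + log²x₂ + log²x₃ ≤ log²y₁ + log²y₂ + log²y₃. -/
open MeasureTheory intervalIntegral Set

noncomputable def bnlPsi (u : ℝ) : ℝ := ∫ s in (0:ℝ)..u, Real.log (1 + s) / s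

lemma bnl_meas (a : ℝ) : Measurable fun t : ℝ => Real.log (1 + a * t) / t :=
  (Real.measurable_log.comp (measurable_const.add (measurable_const.mul measurable_id))).div
    measurable_id

lemma bnl_ii (a b : ℝ) (ha : 0 ≤ a) (hb : 0 ≤ b) :
    IntervalIntegrable (fun t : ℝ => Real.log (1 + a * t) / t) volume 0 b := by
  rw [intervalIntegrable_iff_integrableOn_Ioc_of_le hb]
  apply MeasureTheory.Integrable.mono' (g := fun _ => a) (integrable_const a)
    ((bnl_meas a).aestronglyMeasurable)
  rw [ae_restrict_iff' measurableSet_Ioc]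
  filter_upwards with t ht
  obtain ⟨ht0, _⟩ := ht
  have hat : 0 ≤ a * t := mul_nonneg ha ht0.le
  have hl0 : 0 ≤ Real.log (1 + a * t) := Real.log_nonneg (by linarith)
  have hl1 : Real.log (1 + a * t) ≤ a * t := by
    have := Real.log_le_sub_one_of_pos (x := 1 + a * t) (by linarith)
    linarith
  rw [Real.norm_eq_abs, abs_of_nonneg (div_nonneg hl0 ht0.le), div_le_iff₀ ht0]
  linarith

lemma bnl_subst (a : ℝ) (ha : 0 < a) :
    (∫ t in (0:ℝ)..1, Real.log (1 + a * t) / t) = bnlPsi a := by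
  have h : (fun t : ℝ => Real.log (1 + a * t) / t)
      = fun t : ℝ => a • ((fun s : ℝ => Real.log (1 + s) / s) (a * t)) := by
    funext t
    by_cases ht : t = 0
    · simp [ht]
    · simp only [smul_eq_mul]
      field_simp
  have hs := intervalIntegral.smul_integral_comp_mul_left (a := (0:ℝ)) (b := 1)
    (f := fun s : ℝ => Real.log (1 + s) / s) a
  simp only [mul_zero, mul_one] at hs
  rw [h, intervalIntegral.integral_smul, hs]
  rfl

lemma bnl_psi_deriv (a : ℝ) (ha : 0 < a) :
    HasDerivAt bnlPsi (Real.log (1 + a) / a) a := by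
  have hint : IntervalIntegrable (fun s : ℝ => Real.log (1 + s) / s) volume 0 a := by
    simpa using bnl_ii 1 a zero_le_one ha.le
  have hcont : ContinuousAt (fun s : ℝ => Real.log (1 + s) / s) a := by
    apply ContinuousAt.div
    · exact (Real.continuousAt_log (by linarith)).comp
        ((continuous_const.add continuous_id).continuousAt)
    · exact continuousAt_id
    · exact ha.ne'
  have hmeas : StronglyMeasurableAtFilter (fun s : ℝ => Real.log (1 + s) / s) (nhds a) volume := by
    have := (bnl_meas 1).aestronglyMeasurable (μ := volume)
    simp only [one_mul] at this
    exact this.stronglyMeasurableAtFilter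
  exact intervalIntegral.integral_hasDerivAt_right hint hmeas hcont

lemma bnl_phi_eq (a : ℝ) (ha : 0 < a) :
    bnlPsi a + bnlPsi a⁻¹ = Real.log a ^ 2 / 2 + 2 * bnlPsi 1 := by
  set D : ℝ → ℝ := fun u => bnlPsi u + bnlPsi u⁻¹ - Real.log u ^ 2 / 2 with hDdef
  have hD : ∀ u : ℝ, 0 < u → HasDerivAt D 0 u := by
    intro u hu
    have h1 := bnl_psi_deriv u hu
    have h2 : HasDerivAt (fun v : ℝ => bnlPsi v⁻¹) (-(Real.log (1 + u⁻¹) / u)) u := by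
      have := (bnl_psi_deriv u⁻¹ (by positivity)).comp u (hasDerivAt_inv hu.ne')
      refine this.congr_deriv ?_
      field_simp
    have h3 : HasDerivAt (fun v : ℝ => Real.log v ^ 2 / 2) (Real.log u / u) u := by
      have := ((Real.hasDerivAt_log hu.ne').pow 2).div_const 2
      refine this.congr_deriv ?_
      field_simp
      ring
    have key : Real.log (1 + u) = Real.log u + Real.log (1 + u⁻¹) := by
      rw [← Real.log_mul hu.ne' (by positivity)]
      congr 1
      field_simp
      ring
    have := (h1.add h2).sub h3
    refine this.congr_deriv ?_
    rw [key]
    ring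
  have key : D a = D 1 := by
    rcases le_total 1 a with h | h
    · have hd : ∀ u ∈ Set.uIcc (1:ℝ) a, HasDerivAt D ((fun _ : ℝ => (0:ℝ)) u) u := by
        intro u hu
        rw [Set.uIcc_of_le h] at hu
        exact hD u (lt_of_lt_of_le one_pos hu.1)
      have := intervalIntegral.integral_eq_sub_of_hasDerivAt hd
        (intervalIntegrable_const)
      simp only [intervalIntegral.integral_const, smul_zero] at this
      linarith
    · have hd : ∀ u ∈ Set.uIcc a (1:ℝ), HasDerivAt D ((fun _ : ℝ => (0:ℝ)) u) u := by
        intro u hu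
        rw [Set.uIcc_of_le h] at hu
        exact hD u (lt_of_lt_of_le ha hu.1)
      have := intervalIntegral.integral_eq_sub_of_hasDerivAt hd
        (intervalIntegrable_const)
      simp only [intervalIntegral.integral_const, smul_zero] at this
      linarith
  have hD1 : D 1 = 2 * bnlPsi 1 := by
    simp only [hDdef, inv_one, Real.log_one]
    ring
  have hDa : D a = bnlPsi a + bnlPsi a⁻¹ - Real.log a ^ 2 / 2 := rfl
  rw [hDa, hD1] at key
  linarith

lemma bnl_ptwise (x₁ x₂ x₃ y₁ y₂ y₃ t : ℝ)
    (hx₁ : 0 < x₁) (hx₂ : 0 < x₂) (hx₃ : 0 < x₃)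
    (hy₁ : 0 < y₁) (hy₂ : 0 < y₂) (hy₃ : 0 < y₃)
    (ht : 0 < t)
    (h1 : x₁ + x₂ + x₃ ≤ y₁ + y₂ + y₃)
    (h2 : x₁ * x₂ + x₂ * x₃ + x₃ * x₁ ≤ y₁ * y₂ + y₂ * y₃ + y₃ * y₁)
    (h3 : x₁ * x₂ * x₃ ≤ y₁ * y₂ * y₃) :
    Real.log (1 + x₁ * t) + Real.log (1 + x₂ * t) + Real.log (1 + x₃ * t) ≤
      Real.log (1 + y₁ * t) + Real.log (1 + y₂ * t) + Real.log (1 + y₃ * t) := by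
  have px1 : (0:ℝ) < 1 + x₁ * t := by nlinarith
  have px2 : (0:ℝ) < 1 + x₂ * t := by nlinarith
  have px3 : (0:ℝ) < 1 + x₃ * t := by nlinarith
  have py1 : (0:ℝ) < 1 + y₁ * t := by nlinarith
  have py2 : (0:ℝ) < 1 + y₂ * t := by nlinarith
  have py3 : (0:ℝ) < 1 + y₃ * t := by nlinarith
  have hprod : (1 + x₁ * t) * (1 + x₂ * t) * (1 + x₃ * t) ≤
      (1 + y₁ * t) * (1 + y₂ * t) * (1 + y₃ * t) := by
    nlinarith [mul_le_mul_of_nonneg_right h1 ht.le,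
      mul_le_mul_of_nonneg_right h2 (mul_pos ht ht).le,
      mul_le_mul_of_nonneg_right h3 (mul_pos (mul_pos ht ht) ht).le]
  calc Real.log (1 + x₁ * t) + Real.log (1 + x₂ * t) + Real.log (1 + x₃ * t)
      = Real.log ((1 + x₁ * t) * (1 + x₂ * t) * (1 + x₃ * t)) := by
        rw [Real.log_mul (by positivity) px3.ne', Real.log_mul px1.ne' px2.ne']
    _ ≤ Real.log ((1 + y₁ * t) * (1 + y₂ * t) * (1 + y₃ * t)) :=
        Real.log_le_log (by positivity) hprod
    _ = Real.log (1 + y₁ * t) + Real.log (1 + y₂ * t) + Real.log (1 + y₃ * t) := by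
        rw [Real.log_mul (by positivity) py3.ne', Real.log_mul py1.ne' py2.ne']

theorem birsan_neff_lankeit
    (x₁ x₂ x₃ y₁ y₂ y₃ : ℝ)
    (hx₁ : 0 < x₁) (hx₂ : 0 < x₂) (hx₃ : 0 < x₃)
    (hy₁ : 0 < y₁) (hy₂ : 0 < y₂) (hy₃ : 0 < y₃)
    (h1 : x₁ + x₂ + x₃ ≤ y₁ + y₂ + y₃)
    (h2 : x₁ * x₂ + x₂ * x₃ + x₃ * x₁ ≤ y₁ * y₂ + y₂ * y₃ + y₃ * y₁)
    (h3 : x₁ * x₂ * x₃ = y₁ * y₂ * y₃) :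
    Real.log x₁ ^ 2 + Real.log x₂ ^ 2 + Real.log x₃ ^ 2 ≤
      Real.log y₁ ^ 2 + Real.log y₂ ^ 2 + Real.log y₃ ^ 2 := by
  have hp : (0:ℝ) < x₁ * x₂ * x₃ := by positivity
  have hq : (0:ℝ) < y₁ * y₂ * y₃ := by positivity
  -- reciprocal symmetric function inequalities
  have hr1 : x₁⁻¹ + x₂⁻¹ + x₃⁻¹ ≤ y₁⁻¹ + y₂⁻¹ + y₃⁻¹ := by
    have e1x : x₁⁻¹ + x₂⁻¹ + x₃⁻¹ = (x₁ * x₂ + x₂ * x₃ + x₃ * x₁) / (x₁ * x₂ * x₃) := by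
      field_simp; ring
    have e1y : y₁⁻¹ + y₂⁻¹ + y₃⁻¹ = (y₁ * y₂ + y₂ * y₃ + y₃ * y₁) / (y₁ * y₂ * y₃) := by
      field_simp; ring
    rw [e1x, e1y, h3]
    gcongr
  have hr2 : x₁⁻¹ * x₂⁻¹ + x₂⁻¹ * x₃⁻¹ + x₃⁻¹ * x₁⁻¹ ≤
      y₁⁻¹ * y₂⁻¹ + y₂⁻¹ * y₃⁻¹ + y₃⁻¹ * y₁⁻¹ := by
    have e2x : x₁⁻¹ * x₂⁻¹ + x₂⁻¹ * x₃⁻¹ + x₃⁻¹ * x₁⁻¹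
        = (x₁ + x₂ + x₃) / (x₁ * x₂ * x₃) := by field_simp; ring
    have e2y : y₁⁻¹ * y₂⁻¹ + y₂⁻¹ * y₃⁻¹ + y₃⁻¹ * y₁⁻¹
        = (y₁ + y₂ + y₃) / (y₁ * y₂ * y₃) := by field_simp; ring
    rw [e2x, e2y, h3]
    gcongr
  have hr3 : x₁⁻¹ * x₂⁻¹ * x₃⁻¹ ≤ y₁⁻¹ * y₂⁻¹ * y₃⁻¹ := by
    have : x₁⁻¹ * x₂⁻¹ * x₃⁻¹ = (x₁ * x₂ * x₃)⁻¹ := by ring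
    have h' : y₁⁻¹ * y₂⁻¹ * y₃⁻¹ = (y₁ * y₂ * y₃)⁻¹ := by ring
    rw [this, h', h3]
  -- integrability of all twelve pieces
  have i1 := bnl_ii x₁ 1 hx₁.le zero_le_one
  have i2 := bnl_ii x₂ 1 hx₂.le zero_le_one
  have i3 := bnl_ii x₃ 1 hx₃.le zero_le_one
  have i4 := bnl_ii x₁⁻¹ 1 (by positivity) zero_le_one
  have i5 := bnl_ii x₂⁻¹ 1 (by positivity) zero_le_one
  have i6 := bnl_ii x₃⁻¹ 1 (by positivity) zero_le_one
  have j1 := bnl_ii y₁ 1 hy₁.le zero_le_one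
  have j2 := bnl_ii y₂ 1 hy₂.le zero_le_one
  have j3 := bnl_ii y₃ 1 hy₃.le zero_le_one
  have j4 := bnl_ii y₁⁻¹ 1 (by positivity) zero_le_one
  have j5 := bnl_ii y₂⁻¹ 1 (by positivity) zero_le_one
  have j6 := bnl_ii y₃⁻¹ 1 (by positivity) zero_le_one
  have intx : IntervalIntegrable (fun t : ℝ =>
      Real.log (1 + x₁ * t) / t + Real.log (1 + x₂ * t) / t + Real.log (1 + x₃ * t) / t
      + Real.log (1 + x₁⁻¹ * t) / t + Real.log (1 + x₂⁻¹ * t) / t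
      + Real.log (1 + x₃⁻¹ * t) / t) volume 0 1 :=
    ((((i1.add i2).add i3).add i4).add i5).add i6
  have inty : IntervalIntegrable (fun t : ℝ =>
      Real.log (1 + y₁ * t) / t + Real.log (1 + y₂ * t) / t + Real.log (1 + y₃ * t) / t
      + Real.log (1 + y₁⁻¹ * t) / t + Real.log (1 + y₂⁻¹ * t) / t
      + Real.log (1 + y₃⁻¹ * t) / t) volume 0 1 :=
    ((((j1.add j2).add j3).add j4).add j5).add j6
  have hmono : (∫ t in (0:ℝ)..1,
      (Real.log (1 + x₁ * t) / t + Real.log (1 + x₂ * t) / t + Real.log (1 + x₃ * t) / t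
      + Real.log (1 + x₁⁻¹ * t) / t + Real.log (1 + x₂⁻¹ * t) / t
      + Real.log (1 + x₃⁻¹ * t) / t)) ≤ ∫ t in (0:ℝ)..1,
      (Real.log (1 + y₁ * t) / t + Real.log (1 + y₂ * t) / t + Real.log (1 + y₃ * t) / t
      + Real.log (1 + y₁⁻¹ * t) / t + Real.log (1 + y₂⁻¹ * t) / t
      + Real.log (1 + y₃⁻¹ * t) / t) := by
    apply intervalIntegral.integral_mono_on zero_le_one intx inty
    intro t ht
    rcases eq_or_lt_of_le ht.1 with h0 | h0
    · simp [← h0]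
    · have A := bnl_ptwise x₁ x₂ x₃ y₁ y₂ y₃ t hx₁ hx₂ hx₃ hy₁ hy₂ hy₃ h0 h1 h2 h3.le
      have B := bnl_ptwise x₁⁻¹ x₂⁻¹ x₃⁻¹ y₁⁻¹ y₂⁻¹ y₃⁻¹ t (by positivity) (by positivity)
        (by positivity) (by positivity) (by positivity) (by positivity) h0 hr1 hr2 hr3
      have ex : Real.log (1 + x₁ * t) / t + Real.log (1 + x₂ * t) / t
          + Real.log (1 + x₃ * t) / t + Real.log (1 + x₁⁻¹ * t) / t
          + Real.log (1 + x₂⁻¹ * t) / t + Real.log (1 + x₃⁻¹ * t) / t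
          = (Real.log (1 + x₁ * t) + Real.log (1 + x₂ * t) + Real.log (1 + x₃ * t)
            + (Real.log (1 + x₁⁻¹ * t) + Real.log (1 + x₂⁻¹ * t)
              + Real.log (1 + x₃⁻¹ * t))) / t := by ring
      have ey : Real.log (1 + y₁ * t) / t + Real.log (1 + y₂ * t) / t
          + Real.log (1 + y₃ * t) / t + Real.log (1 + y₁⁻¹ * t) / t
          + Real.log (1 + y₂⁻¹ * t) / t + Real.log (1 + y₃⁻¹ * t) / t
          = (Real.log (1 + y₁ * t) + Real.log (1 + y₂ * t) + Real.log (1 + y₃ * t)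
            + (Real.log (1 + y₁⁻¹ * t) + Real.log (1 + y₂⁻¹ * t)
              + Real.log (1 + y₃⁻¹ * t))) / t := by ring
      rw [ex, ey]
      gcongr
  -- split the integrals
  have splitx : (∫ t in (0:ℝ)..1,
      (Real.log (1 + x₁ * t) / t + Real.log (1 + x₂ * t) / t + Real.log (1 + x₃ * t) / t
      + Real.log (1 + x₁⁻¹ * t) / t + Real.log (1 + x₂⁻¹ * t) / t
      + Real.log (1 + x₃⁻¹ * t) / t))
      = bnlPsi x₁ + bnlPsi x₂ + bnlPsi x₃ + bnlPsi x₁⁻¹ + bnlPsi x₂⁻¹ + bnlPsi x₃⁻¹ := by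
    rw [intervalIntegral.integral_add ((((i1.add i2).add i3).add i4).add i5) i6,
      intervalIntegral.integral_add (((i1.add i2).add i3).add i4) i5,
      intervalIntegral.integral_add ((i1.add i2).add i3) i4,
      intervalIntegral.integral_add (i1.add i2) i3,
      intervalIntegral.integral_add i1 i2,
      bnl_subst x₁ hx₁, bnl_subst x₂ hx₂, bnl_subst x₃ hx₃,
      bnl_subst x₁⁻¹ (by positivity), bnl_subst x₂⁻¹ (by positivity),
      bnl_subst x₃⁻¹ (by positivity)]
  have splity : (∫ t in (0:ℝ)..1,
      (Real.log (1 + y₁ * t) / t + Real.log (1 + y₂ * t) / t + Real.log (1 + y₃ * t) / t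
      + Real.log (1 + y₁⁻¹ * t) / t + Real.log (1 + y₂⁻¹ * t) / t
      + Real.log (1 + y₃⁻¹ * t) / t))
      = bnlPsi y₁ + bnlPsi y₂ + bnlPsi y₃ + bnlPsi y₁⁻¹ + bnlPsi y₂⁻¹ + bnlPsi y₃⁻¹ := by
    rw [intervalIntegral.integral_add ((((j1.add j2).add j3).add j4).add j5) j6,
      intervalIntegral.integral_add (((j1.add j2).add j3).add j4) j5,
      intervalIntegral.integral_add ((j1.add j2).add j3) j4,
      intervalIntegral.integral_add (j1.add j2) j3,
      intervalIntegral.integral_add j1 j2,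
      bnl_subst y₁ hy₁, bnl_subst y₂ hy₂, bnl_subst y₃ hy₃,
      bnl_subst y₁⁻¹ (by positivity), bnl_subst y₂⁻¹ (by positivity),
      bnl_subst y₃⁻¹ (by positivity)]
  rw [splitx, splity] at hmono
  have ex1 := bnl_phi_eq x₁ hx₁
  have ex2 := bnl_phi_eq x₂ hx₂
  have ex3 := bnl_phi_eq x₃ hx₃
  have ey1 := bnl_phi_eq y₁ hy₁
  have ey2 := bnl_phi_eq y₂ hy₂
  have ey3 := bnl_phi_eq y₃ hy₃
  linarith
end

section
/- Let f be a continuous real-valued function on an open interval I ⊆ ℝ, and let X be a random variable on a probability space (Ω, Σ, μ) whose range is contained in I, such that E(X) and E(f(X)) exist and are finite. If E(X) is a point of convexity of f relative to I (meaning f(E(X)) ≤ ∫ f dν for every Borel probability measure ν on I with barycenter E(X) for which f is ν-integrable, or equivalently for every finite convex combination of points of I equal to E(X), extended by continuity), then f(E(X)) ≤ E(f(X)) = ∫_Ω f(X(ω)) dμ(ω). -/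
open MeasureTheory

theorem jensen_at_point_of_convexity
    (I : Set ℝ) (hIopen : IsOpen I) (hIconv : Convex ℝ I)
    (f : ℝ → ℝ) (hf : ContinuousOn f I)
    {Ω : Type*} [MeasurableSpace Ω] (μ : Measure Ω) [IsProbabilityMeasure μ]
    (X : Ω → ℝ) (hXm : Measurable X)
    (hrange : ∀ ω, X ω ∈ I)
    (hXint : Integrable X μ)
    (hfXint : Integrable (fun ω => f (X ω)) μ)
    (hconv : ∀ (n : ℕ) (z : Fin n → ℝ) (w : Fin n → ℝ),
      (∀ k, z k ∈ I) → (∀ k, 0 < w k) → (∑ k, w k = 1) →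
      (∑ k, w k * z k = ∫ ω, X ω ∂μ) →
      f (∫ ω, X ω ∂μ) ≤ ∑ k, w k * f (z k)) :
    f (∫ ω, X ω ∂μ) ≤ ∫ ω, f (X ω) ∂μ := by
  set a := ∫ ω, X ω ∂μ with ha
  -- a ∈ I
  have haI : a ∈ I := by
    have hleft : ∃ x ∈ I, x ≤ a := by
      by_contra h
      push_neg at h
      have hpos : ∀ ω, 0 < X ω - a := fun ω => sub_pos.mpr (h _ (hrange ω))
      have hint : Integrable (fun ω => X ω - a) μ := hXint.sub (integrable_const a)
      have hzero : ∫ ω, (X ω - a) ∂μ = 0 := by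
        rw [integral_sub hXint (integrable_const a), integral_const]
        simp [← ha]
      have := (integral_eq_zero_iff_of_nonneg
        (fun ω => (hpos ω).le) hint).mp hzero
      obtain ⟨ω, hω⟩ := this.exists
      exact absurd hω (ne_of_gt (hpos ω))
    have hright : ∃ y ∈ I, a ≤ y := by
      by_contra h
      push_neg at h
      have hpos : ∀ ω, 0 < a - X ω := fun ω => sub_pos.mpr (h _ (hrange ω))
      have hint : Integrable (fun ω => a - X ω) μ := (integrable_const a).sub hXint
      have hzero : ∫ ω, (a - X ω) ∂μ = 0 := by
        rw [integral_sub (integrable_const a) hXint, integral_const]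
        simp [← ha]
      have := (integral_eq_zero_iff_of_nonneg
        (fun ω => (hpos ω).le) hint).mp hzero
      obtain ⟨ω, hω⟩ := this.exists
      exact absurd hω (ne_of_gt (hpos ω))
    obtain ⟨x, hxI, hxa⟩ := hleft
    obtain ⟨y, hyI, hay⟩ := hright
    exact hIconv.ordConnected.out hxI hyI ⟨hxa, hay⟩
  -- nearby points on both sides
  obtain ⟨ε, hε, hball⟩ := Metric.isOpen_iff.mp hIopen a haI
  have hpI : a - ε/2 ∈ I := by
    apply hball; rw [Metric.mem_ball, Real.dist_eq]
    rw [abs_of_nonpos (by linarith)]; linarith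
  have hqI : a + ε/2 ∈ I := by
    apply hball; rw [Metric.mem_ball, Real.dist_eq]
    rw [abs_of_nonneg (by linarith)]; linarith
  have hpa : a - ε/2 < a := by linarith
  have haq : a < a + ε/2 := by linarith
  -- key two-point inequality
  have key : ∀ x ∈ I, x < a → ∀ y ∈ I, a < y →
      (f a - f x) * (y - a) ≤ (f y - f a) * (a - x) := by
    intro x hxI hxa y hyI hay
    set l : ℝ := (y - a) / (y - x) with hl
    have hxy : 0 < y - x := by linarith
    have hl0 : 0 < l := div_pos (by linarith) hxy
    have hl1 : l < 1 := (div_lt_one hxy).mpr (by linarith)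
    have h := hconv 2 ![x, y] ![l, 1 - l]
      (by intro k; fin_cases k
          · exact hxI
          · exact hyI)
      (by intro k; fin_cases k
          · exact hl0
          · show (0:ℝ) < 1 - l; linarith)
      (by rw [Fin.sum_univ_two]; show l + (1 - l) = 1; ring)
      (by
        rw [Fin.sum_univ_two]
        show l * x + (1 - l) * y = a
        have h0 : l * (y - x) = y - a := div_mul_cancel₀ _ (ne_of_gt hxy)
        nlinarith [h0])
    rw [Fin.sum_univ_two] at h
    simp only [Matrix.cons_val_zero, Matrix.cons_val_one, Matrix.head_cons] at h
    have hle : l * (y - x) = y - a := div_mul_cancel₀ _ (ne_of_gt hxy)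
    have hle' : (1 - l) * (y - x) = a - x := by nlinarith [hle]
    have h' : f a * (y - x) ≤ (y - a) * f x + (a - x) * f y := by
      calc f a * (y - x) ≤ (l * f x + (1 - l) * f y) * (y - x) :=
            mul_le_mul_of_nonneg_right h hxy.le
        _ = f x * (l * (y - x)) + f y * ((1 - l) * (y - x)) := by ring
        _ = (y - a) * f x + (a - x) * f y := by rw [hle, hle']; ring
    nlinarith [h']
  -- supporting slope
  set S : Set ℝ := (fun x => (f a - f x) / (a - x)) '' {x | x ∈ I ∧ x < a} with hS
  have hSne : S.Nonempty := ⟨_, ⟨a - ε/2, ⟨hpI, hpa⟩, rfl⟩⟩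
  have hSbdd : BddAbove S := by
    refine ⟨(f (a + ε/2) - f a) / (a + ε/2 - a), ?_⟩
    rintro s ⟨x, ⟨hxI, hxa⟩, rfl⟩
    rw [div_le_div_iff₀ (by linarith) (by linarith)]
    exact key x hxI hxa _ hqI haq
  set c : ℝ := sSup S with hc
  have hsupport : ∀ x ∈ I, f a + c * (x - a) ≤ f x := by
    intro x hxI
    rcases lt_trichotomy x a with hxa | hxa | hxa
    · have h1 : (f a - f x) / (a - x) ≤ c :=
        le_csSup hSbdd ⟨x, ⟨hxI, hxa⟩, rfl⟩
      rw [div_le_iff₀ (by linarith)] at h1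
      nlinarith
    · simp [hxa]
    · have h2 : c ≤ (f x - f a) / (x - a) := by
        apply csSup_le hSne
        rintro s ⟨u, ⟨huI, hua⟩, rfl⟩
        rw [div_le_div_iff₀ (by linarith) (by linarith)]
        exact key u huI hua x hxI hxa
      rw [le_div_iff₀ (by linarith)] at h2
      nlinarith
  -- integrate the supporting line
  have hint : Integrable (fun ω => f a + c * (X ω - a)) μ :=
    (integrable_const _).add ((hXint.sub (integrable_const a)).const_mul c)
  have hval : ∫ ω, (f a + c * (X ω - a)) ∂μ = f a := by
    have h1 : Integrable (fun ω => c * (X ω - a)) μ :=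
      (hXint.sub (integrable_const a)).const_mul c
    have h2 : Integrable (fun ω => X ω - a) μ := hXint.sub (integrable_const a)
    rw [integral_add (integrable_const _) h1, integral_const_mul,
      integral_sub hXint (integrable_const a), integral_const, integral_const]
    simp [← ha]
  calc f a = ∫ ω, (f a + c * (X ω - a)) ∂μ := hval.symm
    _ ≤ ∫ ω, f (X ω) ∂μ :=
      integral_mono hint hfXint (fun ω => hsupport (X ω) (hrange ω))
end

section
/- If f : ℝ → ℝ is convex, then the function F(X) = trace(f(X)) on the real symmetric n×n matrices (where f(X) is defined by functional calculus, applying f to the eigenvalues) is convex: F(λA + (1−λ)B) ≤ λF(A) + (1−λ)F(B) for all symmetric A, B and λ ∈ [0,1]. -/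
open Matrix Finset

namespace TraceConvexAux

variable {n : ℕ}

lemma star_eq_transpose (V : Matrix (Fin n) (Fin n) ℝ) : star V = Vᵀ := by
  ext i j; simp [Matrix.star_apply]

lemma dot_mulVec_eq (V : Matrix (Fin n) (Fin n) ℝ) (v x : Fin n → ℝ) :
    v ⬝ᵥ (V *ᵥ x) = (star V *ᵥ v) ⬝ᵥ x := by
  rw [star_eq_transpose, Matrix.mulVec_transpose, Matrix.dotProduct_mulVec]

lemma quad_eq {M : Matrix (Fin n) (Fin n) ℝ} (hM : M.IsHermitian) (v : Fin n → ℝ) :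
    v ⬝ᵥ (M *ᵥ v) =
      ∑ j, ((star (hM.eigenvectorUnitary : Matrix (Fin n) (Fin n) ℝ) *ᵥ v) j) ^ 2
        * hM.eigenvalues j := by
  set V : Matrix (Fin n) (Fin n) ℝ := (hM.eigenvectorUnitary : Matrix (Fin n) (Fin n) ℝ) with hV
  have hspec : M = V * Matrix.diagonal hM.eigenvalues * star V := by
    have := hM.spectral_theorem
    simpa [RCLike.ofReal_real_eq_id] using this
  conv_lhs => rw [hspec]
  rw [← Matrix.mulVec_mulVec, ← Matrix.mulVec_mulVec, dot_mulVec_eq]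
  simp only [Matrix.mulVec_diagonal, dotProduct]
  exact Finset.sum_congr rfl fun j _ => by ring

lemma sq_sum_eq (V : Matrix (Fin n) (Fin n) ℝ) (hV : V * star V = 1)
    (v : Fin n → ℝ) :
    ∑ j, ((star V *ᵥ v) j) ^ 2 = ∑ i, (v i) ^ 2 := by
  have h : (star V *ᵥ v) ⬝ᵥ (star V *ᵥ v) = v ⬝ᵥ v := by
    rw [← dot_mulVec_eq, Matrix.mulVec_mulVec, hV, Matrix.one_mulVec]
  simpa [dotProduct, pow_two] using h

end TraceConvexAux

open TraceConvexAux Matrix in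
theorem trace_functional_calculus_convex
    {n : ℕ} (f : ℝ → ℝ) (hf : ConvexOn ℝ Set.univ f)
    (A B : Matrix (Fin n) (Fin n) ℝ)
    (hA : A.IsHermitian) (hB : B.IsHermitian)
    (lam : ℝ) (hlam0 : 0 ≤ lam) (hlam1 : lam ≤ 1)
    (hAB : (lam • A + (1 - lam) • B).IsHermitian) :
    ∑ i, f (hAB.eigenvalues i) ≤
      lam * ∑ i, f (hA.eigenvalues i) + (1 - lam) * ∑ i, f (hB.eigenvalues i) := by
  set C := lam • A + (1 - lam) • B with hC
  set U : Matrix (Fin n) (Fin n) ℝ := (hAB.eigenvectorUnitary : Matrix (Fin n) (Fin n) ℝ) with hU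
  have hUmem := hAB.eigenvectorUnitary.2
  have hUU : star U * U = 1 := hUmem.1
  have hUU' : U * star U = 1 := hUmem.2
  set u : Fin n → Fin n → ℝ := fun i k => U k i with hu
  -- eigenvalues of C as quadratic forms in the columns of U
  have heig : ∀ i, hAB.eigenvalues i = u i ⬝ᵥ (C *ᵥ u i) := by
    intro i
    have h2 := congrArg (fun M => M i i) (show star U * C * U = diagonal (RCLike.ofReal ∘ hAB.eigenvalues) by
      have := hAB.conjStarAlgAut_star_eigenvectorUnitary; simpa [Unitary.conjStarAlgAut_apply] using this)
    simp only [Matrix.diagonal_apply_eq, Function.comp, RCLike.ofReal_real_eq_id, id] at h2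
    rw [← h2]
    simp only [Matrix.mul_apply, dotProduct, Matrix.mulVec, Matrix.star_apply, star_trivial,
      Finset.sum_mul, Finset.mul_sum, dotProduct, hu]
    refine Finset.sum_congr rfl fun k _ => Finset.sum_congr rfl fun l _ => ?_
    rw [← hAB.apply k l]
    simp only [star_trivial]
    ring
  -- columns of U are unit vectors
  have hunit : ∀ i, ∑ k, (u i k) ^ 2 = 1 := by
    intro i
    have h2 := congrArg (fun M => M i i) hUU
    simp only [Matrix.one_apply_eq] at h2
    rw [← h2]
    simp [Matrix.mul_apply, Matrix.star_apply, pow_two, hu]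
  -- Peierls-type bound
  have key : ∀ (M : Matrix (Fin n) (Fin n) ℝ) (hM : M.IsHermitian),
      ∑ i, f (u i ⬝ᵥ (M *ᵥ u i)) ≤ ∑ j, f (hM.eigenvalues j) := by
    intro M hM
    set V : Matrix (Fin n) (Fin n) ℝ := (hM.eigenvectorUnitary : Matrix (Fin n) (Fin n) ℝ)
      with hV
    have hVmem := hM.eigenvectorUnitary.2
    set w : Fin n → Fin n → ℝ := fun i j => ((star V *ᵥ u i) j) ^ 2 with hw
    have hw0 : ∀ i j, 0 ≤ w i j := fun i j => sq_nonneg _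
    have hw1 : ∀ i, ∑ j, w i j = 1 := by
      intro i
      rw [hw]
      simp only
      rw [sq_sum_eq V hVmem.2 (u i), hunit i]
    have hq : ∀ i, u i ⬝ᵥ (M *ᵥ u i) = ∑ j, w i j • hM.eigenvalues j := by
      intro i
      rw [quad_eq hM (u i)]
      exact Finset.sum_congr rfl fun j _ => (smul_eq_mul _ _).symm
    have hjensen : ∀ i, f (u i ⬝ᵥ (M *ᵥ u i)) ≤ ∑ j, w i j * f (hM.eigenvalues j) := by
      intro i
      rw [hq i]
      exact hf.map_sum_le (fun j _ => hw0 i j) (hw1 i) (fun j _ => Set.mem_univ _)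
    calc ∑ i, f (u i ⬝ᵥ (M *ᵥ u i)) ≤ ∑ i, ∑ j, w i j * f (hM.eigenvalues j) :=
          Finset.sum_le_sum fun i _ => hjensen i
      _ = ∑ j, (∑ i, w i j) * f (hM.eigenvalues j) := by
          rw [Finset.sum_comm]
          exact Finset.sum_congr rfl fun j _ => (Finset.sum_mul _ _ _).symm
      _ = ∑ j, f (hM.eigenvalues j) := by
          refine Finset.sum_congr rfl fun j _ => ?_
          have hcol : ∀ i, (star V *ᵥ u i) j = (star V * U) j i := by
            intro i
            simp [Matrix.mulVec, Matrix.mul_apply, dotProduct, hu]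
          have hP : (star V * U) * star (star V * U) = 1 := by
            rw [StarMul.star_mul, star_star, mul_assoc, ← mul_assoc U, hUU', one_mul, hVmem.1]
          have h2 := congrArg (fun M => M j j) hP
          simp only [Matrix.one_apply_eq, Matrix.mul_apply, Matrix.star_apply,
            star_trivial] at h2
          have h3 : ∑ i, w i j = 1 := by
            rw [← h2]
            refine Finset.sum_congr rfl fun i _ => ?_
            simp [hw, Matrix.mulVec, dotProduct, Matrix.star_apply, pow_two, hu]
          rw [h3, one_mul]
  -- combine
  have hAq := key A hA
  have hBq := key B hB
  have hstep : ∀ i, f (hAB.eigenvalues i) ≤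
      lam * f (u i ⬝ᵥ (A *ᵥ u i)) + (1 - lam) * f (u i ⬝ᵥ (B *ᵥ u i)) := by
    intro i
    have hdecomp : hAB.eigenvalues i =
        lam * (u i ⬝ᵥ (A *ᵥ u i)) + (1 - lam) * (u i ⬝ᵥ (B *ᵥ u i)) := by
      rw [heig i, hC]
      simp [Matrix.add_mulVec, Matrix.smul_mulVec, dotProduct_add, dotProduct_smul,
        smul_eq_mul]
    rw [hdecomp]
    exact hf.2 (Set.mem_univ _) (Set.mem_univ _) hlam0 (by linarith) (by ring)
  calc ∑ i, f (hAB.eigenvalues i)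
      ≤ ∑ i, (lam * f (u i ⬝ᵥ (A *ᵥ u i)) + (1 - lam) * f (u i ⬝ᵥ (B *ᵥ u i))) :=
        Finset.sum_le_sum fun i _ => hstep i
    _ = lam * ∑ i, f (u i ⬝ᵥ (A *ᵥ u i)) + (1 - lam) * ∑ i, f (u i ⬝ᵥ (B *ᵥ u i)) := by
        rw [Finset.sum_add_distrib, Finset.mul_sum, Finset.mul_sum]
    _ ≤ lam * ∑ i, f (hA.eigenvalues i) + (1 - lam) * ∑ i, f (hB.eigenvalues i) := by
        have := mul_le_mul_of_nonneg_left hAq hlam0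
        have := mul_le_mul_of_nonneg_left hBq (by linarith : (0:ℝ) ≤ 1 - lam)
        linarith
end
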